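/- Let (η_k)_{k≥1} be iid real random variables and σ an integrable stopping time with respect to the natural filtration of an iid sequence containing the η_k. If lim_{t→∞} t·P(η₁ > t) = s ∈ [0,∞), then lim_{t→∞} t·P(max_{1≤k≤σ} η_k > t) = s·E[σ]. -/

import Mathlib

open MeasureTheory ProbabilityTheory Filter
open scoped ENNReal NNReal

theorem stmt_10 {Ω : Type*} [MeasureSpace Ω] [IsProbabilityMeasure (ℙ : Measure Ω)]
    (ξ : ℕ → Ω → ℝ × ℝ) (hξsm : ∀ n, StronglyMeasurable (ξ n))
    (hindep : iIndepFun ξ ℙ)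
    (hident : ∀ n, IdentDistrib (ξ n) (ξ 1) ℙ ℙ)
    (f : ℝ × ℝ → ℝ) (hf : Measurable f)
    (η : ℕ → Ω → ℝ) (hη : ∀ n ω, η n ω = f (ξ n ω))
    (σ : Ω → ℕ) (hσ : IsStoppingTime (Filtration.natural ξ hξsm) (fun ω => (σ ω : WithTop ℕ)))
    (hσ1 : ∀ ω, 1 ≤ σ ω) (hσint : Integrable (fun ω => (σ ω : ℝ)))
    (s : ℝ) (hs : 0 ≤ s)
    (htail : Tendsto (fun t : ℝ => t * (ℙ {ω | t < η 1 ω}).toReal) atTop (nhds s)) :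
    Tendsto
      (fun t : ℝ => t * (ℙ {ω | ∃ k ∈ Finset.Icc 1 (σ ω), t < η k ω}).toReal)
      atTop (nhds (s * ∫ ω, (σ ω : ℝ))) := by
  classical
  -- basic measurability
  have hηm : ∀ k, Measurable (η k) := fun k => by
    have hk : η k = f ∘ ξ k := funext fun ω => hη k ω
    rw [hk]; exact hf.comp (hξsm k).measurable
  have hσF : ∀ k : ℕ, MeasurableSet[Filtration.natural ξ hξsm k] {ω | k + 1 ≤ σ ω} := by
    intro k
    have h := (hσ k).compl
    convert h using 1
    ext ω; simp only [Set.mem_compl_iff, Set.mem_setOf_eq, not_le]; exact ⟨fun h' => WithTop.coe_lt_coe.mpr h', fun h' => WithTop.coe_lt_coe.mp h'⟩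
  have hσmeas : ∀ k : ℕ, MeasurableSet {ω | k + 1 ≤ σ ω} := fun k =>
    (Filtration.natural ξ hξsm).le k _ (hσF k)
  -- identical tails
  have hidtail : ∀ (m : ℕ) (t : ℝ), ℙ {ω | t < η m ω} = ℙ {ω | t < η 1 ω} := by
    intro m t
    have hid : IdentDistrib (η m) (η 1) ℙ ℙ := by
      have h := (hident m).comp hf
      have e1 : η m = f ∘ ξ m := funext fun ω => hη m ω
      have e2 : η 1 = f ∘ ξ 1 := funext fun ω => hη 1 ω
      rw [e1, e2]; exact h
    have := hid.measure_mem_eq (measurableSet_Ioi (a := t))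
    simpa only [Set.preimage, Set.mem_Ioi] using this
  -- key independence product formula
  have keyA : ∀ (k : ℕ) (B : Set Ω), MeasurableSet[Filtration.natural ξ hξsm k] B → ∀ t : ℝ,
      ℙ (B ∩ {ω | t < η (k+1) ω}) = ℙ B * ℙ {ω | t < η 1 ω} := by
    intro k B hB t
    have hIndep : Indep (Filtration.natural ξ hξsm k)
        (MeasurableSpace.comap (ξ (k+1)) inferInstance) ℙ := by
      have hdisj : Disjoint (Set.Iic k) ({k+1} : Set ℕ) := by
        simp only [Set.disjoint_left, Set.mem_Iic, Set.mem_singleton_iff]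
        intro a ha; omega
      have h := ProbabilityTheory.indep_iSup_of_disjoint
        (m := fun i => MeasurableSpace.comap (ξ i) inferInstance)
        (fun i => (hξsm i).measurable.comap_le) hindep hdisj
      have e2 : (⨆ i ∈ ({k+1} : Set ℕ), MeasurableSpace.comap (ξ i) inferInstance)
          = MeasurableSpace.comap (ξ (k+1)) inferInstance := by
        simp
      have e1 : (⨆ i ∈ Set.Iic k, MeasurableSpace.comap (ξ i) inferInstance)
          = Filtration.natural ξ hξsm k := rfl
      rw [e1, e2] at h
      exact h
    have hTm : MeasurableSet[MeasurableSpace.comap (ξ (k+1)) inferInstance]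
        {ω | t < η (k+1) ω} := by
      refine ⟨f ⁻¹' Set.Ioi t, hf measurableSet_Ioi, ?_⟩
      ext ω
      simp [Set.mem_preimage, Set.mem_Ioi, hη]
    have h1 := (hIndep.indepSet_of_measurableSet hB hTm).measure_inter_eq_mul
    rw [h1, hidtail (k+1) t]
  -- expectation as a sum
  set L : ℝ≥0∞ := ∑' k : ℕ, ℙ {ω | k + 1 ≤ σ ω} with hLdef
  have hlint : ∫⁻ ω, (σ ω : ℝ≥0∞) = L := by
    have hpt : ∀ ω, (σ ω : ℝ≥0∞)
        = ∑' k : ℕ, Set.indicator {ω' | k + 1 ≤ σ ω'} (fun _ => (1 : ℝ≥0∞)) ω := by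
      intro ω
      rw [tsum_eq_sum (s := Finset.range (σ ω)) (fun k hk => by
        simp only [Finset.mem_range, not_lt] at hk
        exact Set.indicator_of_notMem (by simp only [Set.mem_setOf_eq]; omega) _)]
      rw [Finset.sum_congr rfl (fun k hk => Set.indicator_of_mem
        (by simp only [Finset.mem_range] at hk; simp only [Set.mem_setOf_eq]; omega) _)]
      simp
    calc ∫⁻ ω, (σ ω : ℝ≥0∞)
        = ∫⁻ ω, ∑' k : ℕ, Set.indicator {ω' | k + 1 ≤ σ ω'} (fun _ => (1 : ℝ≥0∞)) ω := by
          exact lintegral_congr hpt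
      _ = ∑' k : ℕ, ∫⁻ ω, Set.indicator {ω' | k + 1 ≤ σ ω'} (fun _ => (1 : ℝ≥0∞)) ω := by
          exact lintegral_tsum fun k => (measurable_one.indicator (hσmeas k)).aemeasurable
      _ = L := by
          rw [hLdef]
          exact tsum_congr fun k => lintegral_indicator_one (hσmeas k)
  have hfin : L ≠ ⊤ := by
    rw [← hlint]
    have h := hσint.hasFiniteIntegral
    rw [HasFiniteIntegral] at h
    have : ∀ ω, ‖(σ ω : ℝ)‖ₑ = (σ ω : ℝ≥0∞) := fun ω => by
      simp
    simp only [this] at h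
    exact h.ne
  have hE : ∫ ω, (σ ω : ℝ) = L.toReal := by
    rw [integral_eq_lintegral_of_nonneg_ae (ae_of_all _ fun ω => by positivity)
      hσint.aestronglyMeasurable, ← hlint]
    congr 1
    exact lintegral_congr fun ω => ENNReal.ofReal_natCast _
  set E : ℝ := ∫ ω, (σ ω : ℝ) with hEdef
  set p : ℕ → ℝ := fun k => (ℙ {ω | k + 1 ≤ σ ω}).toReal with hpdef
  have hp : HasSum p E := by
    have hsummable : Summable p := by
      rw [hpdef]
      exact ENNReal.summable_toReal (by rw [← hLdef]; exact hfin)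
    have htsum : ∑' k, p k = E := by
      rw [hpdef, ← ENNReal.tsum_toReal_eq (fun k => measure_ne_top ℙ _), ← hLdef, hE]
    rw [← htsum]
    exact hsummable.hasSum
  set qr : ℝ → ℝ := fun t => (ℙ {ω | t < η 1 ω}).toReal with hqrdef
  set u : ℝ → ℝ := fun t => (ℙ {ω | ∃ k ∈ Finset.Icc 1 (σ ω), t < η k ω}).toReal with hudef
  -- upper bound
  have hUeq : ∀ t : ℝ, {ω | ∃ k ∈ Finset.Icc 1 (σ ω), t < η k ω}
      = ⋃ k : ℕ, ({ω | k + 1 ≤ σ ω} ∩ {ω | t < η (k+1) ω}) := by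
    intro t
    ext ω
    simp only [Set.mem_iUnion, Set.mem_inter_iff, Set.mem_setOf_eq, Finset.mem_Icc]
    constructor
    · rintro ⟨k, ⟨hk1, hk2⟩, hk3⟩
      refine ⟨k - 1, by omega, ?_⟩
      rwa [Nat.sub_add_cancel hk1]
    · rintro ⟨k, h1, h2⟩
      exact ⟨k + 1, ⟨by omega, h1⟩, h2⟩
  have hub : ∀ t : ℝ, u t ≤ E * qr t := by
    intro t
    have h1 : ℙ {ω | ∃ k ∈ Finset.Icc 1 (σ ω), t < η k ω} ≤ L * ℙ {ω | t < η 1 ω} := by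
      rw [hUeq t]
      refine (measure_iUnion_le _).trans ?_
      have heq : ∀ k : ℕ, ℙ ({ω | k + 1 ≤ σ ω} ∩ {ω | t < η (k+1) ω})
          = ℙ {ω | k + 1 ≤ σ ω} * ℙ {ω | t < η 1 ω} := fun k => keyA k _ (hσF k) t
      rw [tsum_congr heq, ENNReal.tsum_mul_right, ← hLdef]
    have h2 := ENNReal.toReal_mono (by
        exact ENNReal.mul_ne_top hfin (measure_ne_top _ _)) h1
    rw [ENNReal.toReal_mul] at h2
    rw [hudef, hqrdef]
    simpa [← hE] using h2
  -- lower bound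
  have hlb : ∀ (N : ℕ) (t : ℝ),
      ∑ k ∈ Finset.range N, (p k - (k : ℝ) * qr t) * qr t ≤ u t := by
    intro N t
    set D : ℕ → Set Ω := fun k =>
      {ω | k + 1 ≤ σ ω} ∩ ⋂ j ∈ Finset.Icc 1 k, {ω | η j ω ≤ t} with hDdef
    set C : ℕ → Set Ω := fun k => D k ∩ {ω | t < η (k+1) ω} with hCdef
    have hηF : ∀ j k : ℕ, j ≤ k → MeasurableSet[Filtration.natural ξ hξsm k] {ω | η j ω ≤ t} := by
      intro j k hjk
      have hle : MeasurableSpace.comap (ξ j) inferInstance ≤ Filtration.natural ξ hξsm k :=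
        le_iSup₂ (f := fun j (_ : j ≤ k) => MeasurableSpace.comap (ξ j) inferInstance) j hjk
      refine hle _ ⟨f ⁻¹' Set.Iic t, hf measurableSet_Iic, ?_⟩
      ext ω; simp [Set.mem_preimage, Set.mem_Iic, hη]
    have hDF : ∀ k, MeasurableSet[Filtration.natural ξ hξsm k] (D k) := by
      intro k
      refine (hσF k).inter (Finset.measurableSet_biInter _ ?_)
      intro j hj
      exact hηF j k (Finset.mem_Icc.mp hj).2
    have hDmeas : ∀ k, MeasurableSet (D k) := fun k =>
      (Filtration.natural ξ hξsm).le k _ (hDF k)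
    have hTmeas : ∀ m : ℕ, MeasurableSet {ω | t < η m ω} := fun m =>
      measurableSet_lt measurable_const (hηm m)
    have hCmeas : ∀ k, MeasurableSet (C k) := fun k => (hDmeas k).inter (hTmeas (k+1))
    have hCdisj' : ∀ i j : ℕ, i < j → Disjoint (C i) (C j) := by
      intro i j hlt
      rw [Set.disjoint_left]
      rintro ω ⟨hDi, hTi⟩ ⟨⟨_, hDj⟩, _⟩
      simp only [Set.mem_iInter, Set.mem_setOf_eq] at hDj
      have := hDj (i+1) (Finset.mem_Icc.mpr ⟨by omega, by omega⟩)
      simp only [Set.mem_setOf_eq] at hTi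
      linarith
    have hCdisj : (↑(Finset.range N) : Set ℕ).PairwiseDisjoint C := by
      intro i _ j _ hij
      rcases lt_or_gt_of_ne hij with h | h
      · exact hCdisj' i j h
      · exact (hCdisj' j i h).symm
    have hCsub : ∀ k, C k ⊆ {ω | ∃ m ∈ Finset.Icc 1 (σ ω), t < η m ω} := by
      rintro k ω ⟨⟨h1, _⟩, h2⟩
      exact ⟨k + 1, Finset.mem_Icc.mpr ⟨by omega, h1⟩, h2⟩
    have hCmeasure : ∀ k, ℙ (C k) = ℙ (D k) * ℙ {ω | t < η 1 ω} := fun k =>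
      keyA k (D k) (hDF k) t
    -- lower bound for ℙ (D k)
    have hDlow : ∀ k : ℕ, p k - (k : ℝ) * qr t ≤ (ℙ (D k)).toReal := by
      intro k
      have hcover : {ω | k + 1 ≤ σ ω} ⊆ D k ∪ ⋃ j ∈ Finset.Icc 1 k, {ω | t < η j ω} := by
        intro ω hω
        by_cases h : ω ∈ ⋃ j ∈ Finset.Icc 1 k, {ω | t < η j ω}
        · exact Or.inr h
        · refine Or.inl ⟨hω, ?_⟩
          simp only [Set.mem_iUnion, Set.mem_setOf_eq, not_exists] at h
          simp only [Set.mem_iInter, Set.mem_setOf_eq]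
          intro j hj
          exact le_of_not_gt (h j hj)
      have h1 : ℙ {ω | k + 1 ≤ σ ω} ≤ ℙ (D k) + (k : ℝ≥0∞) * ℙ {ω | t < η 1 ω} := by
        refine (measure_mono hcover).trans ((measure_union_le _ _).trans ?_)
        gcongr
        refine (measure_biUnion_finset_le _ _).trans ?_
        rw [Finset.sum_congr rfl (fun j _ => hidtail j t), Finset.sum_const,
          Nat.card_Icc]
        simp [mul_comm]
      have h2 := ENNReal.toReal_mono (by
        exact ENNReal.add_ne_top.mpr ⟨measure_ne_top _ _,
          ENNReal.mul_ne_top (ENNReal.natCast_ne_top k) (measure_ne_top _ _)⟩) h1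
      rw [ENNReal.toReal_add (measure_ne_top _ _)
        (ENNReal.mul_ne_top (ENNReal.natCast_ne_top k) (measure_ne_top _ _)),
        ENNReal.toReal_mul, ENNReal.toReal_natCast] at h2
      have : p k ≤ (ℙ (D k)).toReal + (k : ℝ) * qr t := h2
      linarith
    have hqrnn : 0 ≤ qr t := ENNReal.toReal_nonneg
    calc ∑ k ∈ Finset.range N, (p k - (k : ℝ) * qr t) * qr t
        ≤ ∑ k ∈ Finset.range N, (ℙ (C k)).toReal := by
          refine Finset.sum_le_sum fun k _ => ?_
          rw [hCmeasure k, ENNReal.toReal_mul]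
          exact mul_le_mul_of_nonneg_right (hDlow k) hqrnn
      _ = (ℙ (⋃ k ∈ Finset.range N, C k)).toReal := by
          rw [measure_biUnion_finset hCdisj (fun k _ => hCmeas k),
            ENNReal.toReal_sum (fun k _ => measure_ne_top _ _)]
      _ ≤ u t := by
          rw [hudef]
          exact ENNReal.toReal_mono (measure_ne_top _ _)
            (measure_mono (Set.iUnion₂_subset fun k _ => hCsub k))
  -- limit of qr
  have hq0 : Tendsto qr atTop (nhds 0) := by
    have h1 : Tendsto (fun t : ℝ => (t * qr t) * t⁻¹) atTop (nhds (s * 0)) :=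
      htail.mul tendsto_inv_atTop_zero
    rw [mul_zero] at h1
    refine h1.congr' ?_
    filter_upwards [eventually_ge_atTop (1 : ℝ)] with t ht
    have ht0 : t ≠ 0 := by linarith
    rw [mul_comm t, mul_assoc, mul_inv_cancel₀ ht0, mul_one]
  -- conclusion
  have hpnn : ∀ k, 0 ≤ p k := fun k => ENNReal.toReal_nonneg
  have hEnn : 0 ≤ E := by
    rw [hE]; exact ENNReal.toReal_nonneg
  rw [Metric.tendsto_atTop]
  intro ε hε
  have hS : Tendsto (fun n => ∑ k ∈ Finset.range n, p k) atTop (nhds E) :=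
    hp.tendsto_sum_nat
  obtain ⟨N, hN⟩ : ∃ N : ℕ, s * E - ε / 2 < s * ∑ k ∈ Finset.range N, p k := by
    have hsS : Tendsto (fun n => s * ∑ k ∈ Finset.range n, p k) atTop (nhds (s * E)) :=
      hS.const_mul s
    exact (hsS.eventually_const_lt (show s * E - ε / 2 < s * E by linarith)).exists
  set SN := ∑ k ∈ Finset.range N, p k with hSNdef
  set cN := ∑ k ∈ Finset.range N, (k : ℝ) with hcNdef
  have hSNle : SN ≤ E := sum_le_hasSum _ (fun k _ => hpnn k) hp
  have hlowTend : Tendsto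
      (fun t => (t * qr t) * SN - cN * ((t * qr t) * qr t)) atTop (nhds (s * SN)) := by
    have h := (htail.mul_const SN).sub ((htail.mul hq0).const_mul cN)
    simpa using h
  have hupTend : Tendsto (fun t => (t * qr t) * E) atTop (nhds (s * E)) := htail.mul_const E
  have h1 : ∀ᶠ t in atTop, (t * qr t) * E < s * E + ε :=
    hupTend.eventually_lt_const (by linarith)
  have h2 : ∀ᶠ t in atTop, s * E - ε < (t * qr t) * SN - cN * ((t * qr t) * qr t) :=
    hlowTend.eventually_const_lt (by linarith)
  have hcomb : ∀ᶠ t in atTop,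
      dist (t * (ℙ {ω | ∃ k ∈ Finset.Icc 1 (σ ω), t < η k ω}).toReal) (s * E) < ε := by
    filter_upwards [h1, h2, eventually_ge_atTop (0 : ℝ)] with t ht1 ht2 ht3
    have hut := hub t
    have hlt := hlb N t
    have hqrnn : 0 ≤ qr t := ENNReal.toReal_nonneg
    have hueq : (ℙ {ω | ∃ k ∈ Finset.Icc 1 (σ ω), t < η k ω}).toReal = u t := by rw [hudef]
    rw [hueq]
    have hupper : t * u t ≤ (t * qr t) * E := by
      calc t * u t ≤ t * (E * qr t) := mul_le_mul_of_nonneg_left hut ht3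
        _ = (t * qr t) * E := by ring
    have halg : t * (∑ k ∈ Finset.range N, (p k - (k : ℝ) * qr t) * qr t)
        = (t * qr t) * SN - cN * ((t * qr t) * qr t) := by
      rw [hSNdef, hcNdef]
      simp only [sub_mul, Finset.sum_sub_distrib, ← Finset.sum_mul]
      ring
    have hlower : (t * qr t) * SN - cN * ((t * qr t) * qr t) ≤ t * u t := by
      rw [← halg]
      exact mul_le_mul_of_nonneg_left hlt ht3
    rw [Real.dist_eq, abs_sub_lt_iff]
    constructor <;> linarith
  exact eventually_atTop.mp hcomb
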